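/- Let L be self-adjoint in L²(μ) with orthonormal eigenbasis u₁,…,uₙ and eigenvalues λ₁,…,λₙ. If f, g : {1,…,n} → ℝ are such that D(x,y) = f(x)g(y) is a nonzero self-duality function for L (i.e., L D = D Lᵀ and D is not identically zero), then f and g are eigenvectors of L corresponding to the same eigenvalue. -/

import Mathlib

open Matrix BigOperators

theorem product_selfduality_eigenfunctions {n : ℕ}
    (L : Matrix (Fin n) (Fin n) ℝ) (μ : Fin n → ℝ) (hμ : ∀ x, 0 < μ x)
    (hsa : ∀ x y, μ x * L x y = μ y * L y x)
    (u : Fin n → Fin n → ℝ) (lam : Fin n → ℝ)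
    (heig : ∀ i, L *ᵥ u i = lam i • u i)
    (horth : ∀ i j, (∑ x, u i x * u j x * μ x) = if i = j then 1 else 0)
    (f g : Fin n → ℝ)
    (D : Matrix (Fin n) (Fin n) ℝ) (hD : ∀ x y, D x y = f x * g y)
    (hdual : L * D = D * Lᵀ) (hne : D ≠ 0) :
    ∃ c : ℝ, L *ᵥ f = c • f ∧ L *ᵥ g = c • g ∧ f ≠ 0 ∧ g ≠ 0 := by
  have key : ∀ x y, (L *ᵥ f) x * g y = f x * ((L *ᵥ g) y) := by
    intro x y
    have h := congrFun (congrFun hdual x) y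
    simp only [Matrix.mul_apply, hD, Matrix.transpose_apply] at h
    simp only [Matrix.mulVec, dotProduct]
    rw [Finset.sum_mul, Finset.mul_sum]
    calc (∑ z, L x z * f z * g y) = ∑ z, L x z * (f z * g y) := by
          exact Finset.sum_congr rfl fun z _ => by ring
      _ = ∑ z, f x * g z * L y z := h
      _ = ∑ z, f x * (L y z * g z) := Finset.sum_congr rfl fun z _ => by ring
  obtain ⟨x₀, y₀, h0⟩ : ∃ x y, f x * g y ≠ 0 := by
    by_contra h
    push_neg at h
    exact hne (by ext x y; simp [hD, h x y])
  have hf0 : f x₀ ≠ 0 := fun h => h0 (by simp [h])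
  have hg0 : g y₀ ≠ 0 := fun h => h0 (by simp [h])
  refine ⟨(L *ᵥ g) y₀ / g y₀, ?_, ?_, ?_, ?_⟩
  · funext x
    have := key x y₀
    simp only [Pi.smul_apply, smul_eq_mul]; field_simp
    linarith [this]
  · funext y
    have h1 := key x₀ y
    have h2 := key x₀ y₀
    have hLf : (L *ᵥ f) x₀ = (L *ᵥ g) y₀ / g y₀ * f x₀ := by
      field_simp; linarith [h2]
    rw [hLf] at h1
    simp only [Pi.smul_apply, smul_eq_mul]
    have := mul_left_cancel₀ hf0 (by linarith [h1] : f x₀ * ((L *ᵥ g) y₀ / g y₀ * g y) = f x₀ * (L *ᵥ g) y)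
    linarith
  · exact fun h => hf0 (by rw [h]; rfl)
  · exact fun h => hg0 (by rw [h]; rfl)
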